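/- A homogeneous polynomial of degree m in h-1 variables with coefficients in C_p that vanishes at (σ^1(a),…,σ^{h-1}(a)) for all a in a neighborhood of 0 in O_F is identically zero. -/

import Mathlib

open MvPolynomial

private lemma aux_eq_zero_of_eval_subset {R : Type*} [CommRing R] [IsDomain R]
    {S : Set R} (hS : S.Infinite) :
    ∀ (n : ℕ) (Q : MvPolynomial (Fin n) R),
      (∀ t : Fin n → R, (∀ i, t i ∈ S) → MvPolynomial.eval t Q = 0) → Q = 0 := by
  intro n
  induction n with
  | zero =>
    intro Q hQ
    have h1 := hQ (fun i => i.elim0) (fun i => i.elim0)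
    rw [Q.eq_C_of_isEmpty, MvPolynomial.eval_C] at h1
    rw [Q.eq_C_of_isEmpty, h1, map_zero]
  | succ n ih =>
    intro Q hQ
    have key : ∀ t : Fin n → R, (∀ i, t i ∈ S) →
        Polynomial.map (MvPolynomial.eval t) (MvPolynomial.finSuccEquiv R n Q) = 0 := by
      intro t ht
      apply Polynomial.eq_zero_of_infinite_isRoot
      apply hS.mono
      intro y hy
      simp only [Set.mem_setOf_eq, Polynomial.IsRoot]
      rw [← MvPolynomial.eval_eq_eval_mv_eval']
      exact hQ (Fin.cons y t) (fun i => Fin.cases hy ht i)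
    have h0 : MvPolynomial.finSuccEquiv R n Q = 0 := by
      ext k : 1
      rw [Polynomial.coeff_zero]
      apply ih
      intro t ht
      have h2 := congrArg (fun q => Polynomial.coeff q k) (key t ht)
      simpa using h2
    have := congrArg (MvPolynomial.finSuccEquiv R n).symm h0
    simpa using this

private lemma aux_eval_mul {ι R : Type*} [Fintype ι] [CommSemiring R]
    {P : MvPolynomial ι R} {m : ℕ} (hP : P.IsHomogeneous m) (c : R) (x : ι → R) :
    MvPolynomial.eval (fun i => c * x i) P = c ^ m * MvPolynomial.eval x P := by
  classical
  rw [MvPolynomial.eval_eq', MvPolynomial.eval_eq', Finset.mul_sum]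
  apply Finset.sum_congr rfl
  intro d hd
  have hdm : ∑ i, d i = m := by
    have h1 := hP (MvPolynomial.mem_support_iff.mp hd)
    rw [← h1, Finsupp.weight_apply, Finsupp.sum]
    simp only [Pi.one_apply, smul_eq_mul, mul_one]
    exact (Finset.sum_subset (Finset.subset_univ d.support)
      (fun i _ hi => Finsupp.notMem_support_iff.mp hi)).symm
  have hprod : ∏ i, (c * x i) ^ d i = c ^ m * ∏ i, x i ^ d i := by
    rw [← hdm]
    simp_rw [mul_pow]
    rw [Finset.prod_mul_distrib, Finset.prod_pow_eq_pow_sum]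
  rw [hprod]
  ring

/-- Let `F` be the unramified extension of `ℚ_p` of degree `h` inside
`ℂ_p` (modelled by a normed field `F` with `[F : ℚ_p] = h` and an automorphism `σ` of
order `h`, the Frobenius), and let `L` be a field containing `F` (modelling `ℂ_p`).
A homogeneous polynomial of degree `m` in `h-1` variables with coefficients in `L` that
vanishes at `(σ^1(a), …, σ^{h-1}(a))` for all `a` in a neighborhood of `0` in `𝒪_F` is
identically zero. -/
theorem stmt10 (p : ℕ) [Fact p.Prime] (h : ℕ) (hh : 2 ≤ h)
    (F : Type*) [NormedField F] [NormedAlgebra ℚ_[p] F]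
    [FiniteDimensional ℚ_[p] F] (hdeg : Module.finrank ℚ_[p] F = h)
    (σ : F ≃ₐ[ℚ_[p]] F) (hord : orderOf σ = h)
    (L : Type*) [Field L] [Algebra F L]
    (P : MvPolynomial (Fin (h - 1)) L) (m : ℕ) (hhom : P.IsHomogeneous m)
    (hvan : ∃ ε : ℝ, 0 < ε ∧ ∀ a : F, ‖a‖ < ε →
      MvPolynomial.eval (fun i : Fin (h - 1) => algebraMap F L ((⇑σ)^[(i : ℕ) + 1] a)) P = 0) :
    P = 0 := by
  classical
  obtain ⟨ε, hε, hvan⟩ := hvan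
  have hFL : Function.Injective (algebraMap F L) := (algebraMap F L).injective
  have hQF : Function.Injective (algebraMap ℚ_[p] F) := (algebraMap ℚ_[p] F).injective
  haveI : CharZero F := charZero_of_injective_algebraMap hQF
  haveI : CharZero L := charZero_of_injective_algebraMap hFL
  -- iterates of σ are powers
  have hiter : ∀ (k : ℕ) (x : F), (⇑σ)^[k] x = (σ ^ k) x := by
    intro k
    induction k with
    | zero => intro x; simp
    | succ k ih =>
      intro x
      rw [Function.iterate_succ_apply, ih, pow_succ, AlgEquiv.mul_apply]
  -- vanishing for all a in F, by homogeneity and scaling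
  have hpR : (1 : ℝ) < (p : ℝ) := by
    exact_mod_cast (Fact.out : p.Prime).one_lt
  have hvanF : ∀ a : F,
      MvPolynomial.eval (fun i : Fin (h - 1) =>
        algebraMap F L ((σ ^ ((i : ℕ) + 1)) a)) P = 0 := by
    intro a
    have hp1 : ‖(p : ℚ_[p])‖ < 1 := by
      rw [Padic.norm_p]
      rw [inv_lt_one_iff₀]
      right; exact hpR
    have ha1 : (0 : ℝ) < ‖a‖ + 1 := by positivity
    obtain ⟨n, hn⟩ := exists_pow_lt_of_lt_one (div_pos hε ha1) hp1
    set c : ℚ_[p] := (p : ℚ_[p]) ^ n with hc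
    have hc0 : c ≠ 0 := pow_ne_zero _ (by
      exact_mod_cast (Fact.out : p.Prime).ne_zero)
    have hnorm : ‖c • a‖ < ε := by
      rw [norm_smul, hc, norm_pow]
      calc ‖(p : ℚ_[p])‖ ^ n * ‖a‖ ≤ ‖(p : ℚ_[p])‖ ^ n * (‖a‖ + 1) := by
            apply mul_le_mul_of_nonneg_left (by linarith) (by positivity)
        _ < (ε / (‖a‖ + 1)) * (‖a‖ + 1) := by
            apply mul_lt_mul_of_pos_right hn ha1
        _ = ε := div_mul_cancel₀ _ (ne_of_gt ha1)
    have h0 := hvan (c • a) hnorm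
    set d : L := algebraMap F L (algebraMap ℚ_[p] F c) with hd
    have hd0 : d ≠ 0 := by
      rw [hd]
      simp only [ne_eq, map_eq_zero]
      exact hc0
    have hpoint : (fun i : Fin (h - 1) => algebraMap F L ((⇑σ)^[(i : ℕ) + 1] (c • a)))
        = fun i : Fin (h - 1) => d * algebraMap F L ((σ ^ ((i : ℕ) + 1)) a) := by
      funext i
      rw [hiter, Algebra.smul_def, map_mul, AlgEquiv.commutes, map_mul]
    rw [hpoint, aux_eval_mul hhom d _] at h0
    exact (mul_eq_zero.mp h0).resolve_left (pow_ne_zero _ hd0)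
  -- set up basis, ring homs, and the matrix
  let b : Module.Basis (Fin h) ℚ_[p] F := Module.finBasisOfFinrankEq ℚ_[p] F hdeg
  let q : ℚ_[p] →+* L := (algebraMap F L).comp (algebraMap ℚ_[p] F)
  let g : Fin (h - 1) → (F →+* L) := fun i =>
    (algebraMap F L).comp ((σ ^ ((i : ℕ) + 1)).toAlgHom.toRingHom)
  have hg_apply : ∀ (i : Fin (h - 1)) (x : F),
      g i x = algebraMap F L ((σ ^ ((i : ℕ) + 1)) x) := fun i x => rfl
  have hg_smul : ∀ (i : Fin (h - 1)) (s : ℚ_[p]) (y : F),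
      g i (s • y) = q s * g i y := by
    intro i s y
    rw [hg_apply, Algebra.smul_def, map_mul, AlgEquiv.commutes, map_mul, hg_apply]
    rfl
  let M : Matrix (Fin (h - 1)) (Fin h) L := Matrix.of fun i j => g i (b j)
  -- the ring homs are pairwise distinct
  let gm : Fin (h - 1) → (F →* L) := fun i => (g i).toMonoidHom
  have hginj : Function.Injective gm := by
    intro i i' hii'
    have hpow : σ ^ ((i : ℕ) + 1) = σ ^ ((i' : ℕ) + 1) := by
      ext x
      apply hFL
      have := DFunLike.congr_fun hii' x
      simpa [gm, hg_apply] using this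
    have hi : ((i : ℕ) + 1) < orderOf σ := by
      rw [hord]
      have := i.isLt
      omega
    have hi' : ((i' : ℕ) + 1) < orderOf σ := by
      rw [hord]
      have := i'.isLt
      omega
    have := pow_injOn_Iio_orderOf (Set.mem_Iio.mpr hi) (Set.mem_Iio.mpr hi') hpow
    exact Fin.ext (by omega)
  -- rows of M are linearly independent over L (Dedekind/Artin)
  have hM : LinearIndependent L (fun i => M i) := by
    have hDed := (linearIndependent_monoidHom F L).comp gm hginj
    rw [Fintype.linearIndependent_iff] at hDed ⊢
    intro c hc
    have hcj : ∀ j, ∑ i, c i * M i j = 0 := by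
      intro j
      have := congrFun hc j
      simpa using this
    apply hDed c
    funext x
    simp only [Finset.sum_apply, Pi.smul_apply, Function.comp_apply, smul_eq_mul,
      Pi.zero_apply]
    have hgm : ∀ i : Fin (h - 1), (gm i) x = g i x := fun i => rfl
    simp_rw [hgm]
    have hgx : ∀ i : Fin (h - 1), g i x = ∑ j, q (b.repr x j) * M i j := by
      intro i
      conv_lhs => rw [← b.sum_repr x]
      rw [map_sum]
      apply Finset.sum_congr rfl
      intro j _
      rw [hg_smul]
      rfl
    calc ∑ i, c i * g i x
        = ∑ i, ∑ j, c i * (q (b.repr x j) * M i j) := by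
          apply Finset.sum_congr rfl
          intro i _
          rw [hgx, Finset.mul_sum]
      _ = ∑ j, ∑ i, c i * (q (b.repr x j) * M i j) := Finset.sum_comm
      _ = ∑ j, q (b.repr x j) * ∑ i, c i * M i j := by
          apply Finset.sum_congr rfl
          intro j _
          rw [Finset.mul_sum]
          apply Finset.sum_congr rfl
          intro i _
          ring
      _ = 0 := by simp [hcj]
  -- hence M.mulVec is surjective
  have hsurj : Function.Surjective M.mulVec := by
    have hrank : M.rank = h - 1 := by
      rw [hM.rank_matrix]
      simp
    have htop : LinearMap.range M.mulVecLin = ⊤ := by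
      apply Submodule.eq_top_of_finrank_eq
      have h1 : Module.finrank L ↥(LinearMap.range M.mulVecLin) = M.rank := rfl
      rw [h1, hrank]
      simp [Module.finrank_pi]
    intro y
    obtain ⟨t, ht⟩ := LinearMap.range_eq_top.mp htop y
    exact ⟨t, ht⟩
  -- the composed polynomial Q
  let G : Fin (h - 1) → MvPolynomial (Fin h) L := fun i =>
    ∑ j, MvPolynomial.C (M i j) * MvPolynomial.X j
  let Q : MvPolynomial (Fin h) L := MvPolynomial.eval₂ MvPolynomial.C G P
  have hQeval : ∀ t : Fin h → L,
      MvPolynomial.eval t Q = MvPolynomial.eval (M.mulVec t) P := by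
    intro t
    rw [show Q = MvPolynomial.eval₂ MvPolynomial.C G P from rfl, MvPolynomial.eval_eval₂]
    have h1 : (MvPolynomial.eval t).comp (MvPolynomial.C (σ := Fin h) (R := L))
        = RingHom.id L := by
      ext r
      simp
    rw [h1]
    have h2 : (fun s => MvPolynomial.eval t (G s)) = M.mulVec t := by
      funext i
      simp [G, Matrix.mulVec, dotProduct]
    rw [h2]
    rfl
  -- Q vanishes on all points with coordinates in the image of ℚ_p
  have hSinf : (Set.range ⇑q).Infinite :=
    Set.infinite_range_of_injective q.injective
  have hQ0 : Q = 0 := by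
    apply aux_eq_zero_of_eval_subset hSinf
    intro t ht
    choose s hs using ht
    rw [hQeval]
    have hMt : M.mulVec t = fun i : Fin (h - 1) =>
        algebraMap F L ((σ ^ ((i : ℕ) + 1)) (∑ j, s j • b j)) := by
      funext i
      rw [← hg_apply]
      rw [map_sum]
      simp only [Matrix.mulVec, dotProduct]
      apply Finset.sum_congr rfl
      intro j _
      rw [hg_smul, hs j]
      show M i j * t j = t j * M i j
      ring
    rw [hMt]
    exact hvanF _
  -- conclude
  haveI : Infinite L := CharZero.infinite L
  apply hhom.eq_zero_of_forall_eval_eq_zero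
  intro y
  obtain ⟨t, rfl⟩ := hsurj y
  rw [← hQeval, hQ0, map_zero]
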